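/- Let n ≥ 3 be a natural number, let t_max be a natural number with t_max ≤ n¹⁰, let s > 0 be real, let 0 < ρ ≤ 1/4000, and set σ² := ρ s² / log n. Let μ be the Gaussian probability measure on ℝ with mean 0 and variance σ². Then (μ{x : |x| ≤ 0.1 s})^{t_max} ≥ 1 − n⁻¹⁰/2. -/

import Mathlib

open MeasureTheory ProbabilityTheory

open Real Set NNReal

lemma tail_bound (v : NNReal) (hv : 0 < (v:ℝ)) (a : ℝ) (ha : 0 < a) :
    ∫ x in Ioi a, gaussianPDFReal 0 v x ≤
      (Real.sqrt (2 * π * v))⁻¹ * Real.exp (-(a^2/(2*v))) * (v / a) := by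
  set c : ℝ := a / v with hcdef
  have hc : 0 < c := div_pos ha hv
  set K : ℝ := (Real.sqrt (2 * π * v))⁻¹ with hKdef
  have hK : (0:ℝ) ≤ K := by positivity
  set D : ℝ := K * Real.exp (-(a^2/(2*v))) * Real.exp (c*a) with hD
  have hpt : ∀ x ∈ Ioi a, gaussianPDFReal 0 v x ≤ D * Real.exp (-(c*x)) := by
    intro x hx
    simp only [mem_Ioi] at hx
    rw [gaussianPDFReal, sub_zero, ← hKdef]
    have hexp : Real.exp (-x^2/(2*v)) ≤
        Real.exp (-(a^2/(2*v))) * (Real.exp (c*a) * Real.exp (-(c*x))) := by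
      rw [← Real.exp_add, ← Real.exp_add, Real.exp_le_exp, ← sub_nonneg, hcdef]
      have heq : -(a^2/(2*v)) + (a/(v:ℝ)*a + -(a/(v:ℝ)*x)) - -x^2/(2*(v:ℝ))
          = (x-a)^2/(2*(v:ℝ)) := by field_simp; ring
      rw [heq]; positivity
    calc K * Real.exp (-x^2/(2*v))
        ≤ K * (Real.exp (-(a^2/(2*v))) * (Real.exp (c*a) * Real.exp (-(c*x)))) := by gcongr
      _ = D * Real.exp (-(c*x)) := by rw [hD]; ring
  have hint : IntegrableOn (fun x => D * Real.exp (-(c*x))) (Ioi a) := by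
    have := (exp_neg_integrableOn_Ioi a hc).const_mul D
    simpa [neg_mul, IntegrableOn] using this
  calc ∫ x in Ioi a, gaussianPDFReal 0 v x
      ≤ ∫ x in Ioi a, D * Real.exp (-(c*x)) :=
        setIntegral_mono_on ((integrable_gaussianPDFReal 0 v).integrableOn)
          hint measurableSet_Ioi hpt
    _ = D * (c⁻¹ * Real.exp (-(c*a))) := by
        rw [integral_const_mul]
        congr 1
        have := integral_comp_mul_left_Ioi (fun y => Real.exp (-y)) a hc
        simp only [smul_eq_mul] at this
        rw [this, integral_exp_neg_Ioi]
    _ = K * Real.exp (-(a^2/(2*v))) * (v / a) := by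
        rw [hD, mul_comm (c⁻¹), ← mul_assoc, mul_assoc _ (Real.exp (c*a)), ← Real.exp_add]
        simp only [add_neg_cancel, Real.exp_zero, mul_one]
        congr 1
        rw [hcdef, inv_div]

set_option maxHeartbeats 1000000 in
/-- Key probabilistic estimate in Lemma 4.3: for `n ≥ 3`, `t_max ≤ n¹⁰`,
`0 < ρ ≤ 1/4000` and `σ² = ρ s² / log n`, a `N(0,σ²)` variable stays within
`0.1 s` with probability whose `t_max`-th power is at least `1 − n⁻¹⁰/2`. -/
theorem stmt19 (n : ℕ) (hn : 3 ≤ n) (tmax : ℕ) (htmax : tmax ≤ n ^ 10)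
    (s ρ : ℝ) (hs : 0 < s) (hρ0 : 0 < ρ) (hρ1 : ρ ≤ 1 / 4000) :
    (1 : ℝ) - ((n : ℝ) ^ 10)⁻¹ / 2 ≤
      ((gaussianReal 0 (Real.toNNReal (ρ * s ^ 2 / Real.log n)))
          {x : ℝ | |x| ≤ 0.1 * s}).toReal ^ tmax := by
  have hn3 : (3:ℝ) ≤ (n:ℝ) := by exact_mod_cast hn
  set L : ℝ := Real.log n with hLdef
  have hL1 : 1 ≤ L := by
    rw [hLdef, Real.le_log_iff_exp_le (by linarith)]
    calc Real.exp 1 ≤ 2.7182818286 := le_of_lt Real.exp_one_lt_d9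
      _ ≤ (n:ℝ) := by linarith
  have hL : 0 < L := by linarith
  have hvpos : 0 < ρ * s^2 / L := by positivity
  set v : ℝ≥0 := Real.toNNReal (ρ * s^2 / L) with hvdef
  have hvcoe : (v:ℝ) = ρ * s^2 / L := Real.coe_toNNReal _ hvpos.le
  have hvpos' : 0 < (v:ℝ) := by rw [hvcoe]; exact hvpos
  have hv0 : v ≠ 0 := by
    intro h; rw [h] at hvpos'; simp at hvpos'
  set a : ℝ := 0.1 * s with hadef
  have ha : 0 < a := by rw [hadef]; positivity
  set μ := gaussianReal 0 v with hμdef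
  set A : Set ℝ := {x : ℝ | |x| ≤ a} with hAdef
  have hA : MeasurableSet A := measurableSet_le (by fun_prop) measurable_const
  have hcompl : Aᶜ = Iio (-a) ∪ Ioi a := by
    ext x
    simp only [hAdef, mem_compl_iff, mem_setOf_eq, abs_le, not_and_or, not_le, mem_union,
      mem_Iio, mem_Ioi]
  have hsym : μ (Iio (-a)) = μ (Ioi a) := by
    have hmap : (gaussianReal 0 v).map (fun x => (-1 : ℝ) * x) = gaussianReal 0 v := by
      rw [gaussianReal_map_const_mul (-1 : ℝ)]
      norm_num
    conv_lhs => rw [hμdef, ← hmap]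
    rw [Measure.map_apply (by fun_prop) measurableSet_Iio]
    congr 1
    ext x
    simp [lt_neg]
  set I : ℝ := ∫ x in Ioi a, gaussianPDFReal 0 v x with hIdef
  have hIoi : μ (Ioi a) = ENNReal.ofReal I := gaussianReal_apply_eq_integral 0 hv0 _
  have hInn : 0 ≤ I :=
    setIntegral_nonneg measurableSet_Ioi (fun x _ => gaussianPDFReal_nonneg 0 v x)
  have hIbound : I ≤ (Real.sqrt (2 * π * v))⁻¹ * Real.exp (-(a^2/(2*v))) * ((v:ℝ) / a) :=
    tail_bound v hvpos' a ha
  -- numeric bound on the prefactor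
  have hsqv : Real.sqrt v ≤ a / 2 := by
    have h1 : (v:ℝ) ≤ (a/2)^2 := by
      rw [hvcoe, hadef]
      have h2 : ρ * s^2 / L ≤ ρ * s^2 := div_le_self (by positivity) hL1
      nlinarith [sq_nonneg s]
    calc Real.sqrt v ≤ Real.sqrt ((a/2)^2) := Real.sqrt_le_sqrt h1
      _ = a/2 := Real.sqrt_sq (by positivity)
  have hKb : (Real.sqrt (2 * π * v))⁻¹ * ((v:ℝ)/a) ≤ 1/4 := by
    have hsv : 0 < Real.sqrt v := Real.sqrt_pos.mpr hvpos'
    have h2pi : (2:ℝ) ≤ Real.sqrt (2*π) := by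
      have h4 : Real.sqrt 4 = 2 := by
        rw [show (4:ℝ) = 2^2 by norm_num, Real.sqrt_sq (by norm_num : (0:ℝ) ≤ 2)]
      rw [← h4]
      exact Real.sqrt_le_sqrt (by nlinarith [Real.pi_gt_three])
    have hfac : 2 * Real.sqrt v ≤ Real.sqrt (2*π*v) := by
      rw [Real.sqrt_mul (by positivity : (0:ℝ) ≤ 2*π)]
      exact mul_le_mul_of_nonneg_right h2pi hsv.le
    calc (Real.sqrt (2 * π * v))⁻¹ * ((v:ℝ)/a)
        ≤ (2 * Real.sqrt v)⁻¹ * ((v:ℝ)/a) := by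
          apply mul_le_mul_of_nonneg_right _ (by positivity)
          exact inv_anti₀ (by positivity) hfac
      _ ≤ 1/4 := by
          rw [inv_mul_le_iff₀ (by positivity), div_le_iff₀ ha]
          nlinarith [Real.mul_self_sqrt hvpos'.le, hsqv, hsv.le, ha]
  -- exponential bound
  have hExp : Real.exp (-(a^2/(2*(v:ℝ)))) ≤ ((n:ℝ)^20)⁻¹ := by
    have h20 : 20 * L ≤ a^2/(2*(v:ℝ)) := by
      rw [hvcoe, le_div_iff₀ (by positivity)]
      have heq : 20*L*(2*(ρ*s^2/L)) = 40*(ρ*s^2) := by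
        field_simp
        ring
      rw [heq, hadef]
      nlinarith [sq_nonneg s]
    have hexpL : Real.exp L = (n:ℝ) := Real.exp_log (by linarith)
    calc Real.exp (-(a^2/(2*(v:ℝ)))) ≤ Real.exp (-(20*L)) := by
          rw [Real.exp_le_exp]; linarith
      _ = ((n:ℝ)^20)⁻¹ := by
          rw [Real.exp_neg]
          congr 1
          rw [show (20:ℝ)*L = ((20:ℕ):ℝ)*L by norm_num, Real.exp_nat_mul, hexpL]
  have hImain : I ≤ 1/4 * ((n:ℝ)^20)⁻¹ := by
    calc I ≤ (Real.sqrt (2 * π * v))⁻¹ * Real.exp (-(a^2/(2*v))) * ((v:ℝ) / a) := hIbound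
      _ = ((Real.sqrt (2 * π * v))⁻¹ * ((v:ℝ)/a)) * Real.exp (-(a^2/(2*(v:ℝ)))) := by ring
      _ ≤ 1/4 * ((n:ℝ)^20)⁻¹ :=
          mul_le_mul hKb hExp (Real.exp_nonneg _) (by norm_num)
  -- measure arithmetic
  have hprob : IsProbabilityMeasure μ := by rw [hμdef]; infer_instance
  have hcomplmeas : μ Aᶜ = ENNReal.ofReal I + ENNReal.ofReal I := by
    rw [hcompl, measure_union ((Iic_disjoint_Ioi (by linarith)).mono_left Iio_subset_Iic_self)
      measurableSet_Ioi, hsym, hIoi]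
  have hq : (μ Aᶜ).toReal = 2*I := by
    rw [hcomplmeas, ENNReal.toReal_add ENNReal.ofReal_ne_top ENNReal.ofReal_ne_top,
      ENNReal.toReal_ofReal hInn]
    ring
  have hp : (μ A).toReal = 1 - 2*I := by
    have hsum : μ A + μ Aᶜ = 1 := by
      rw [measure_add_measure_compl hA, measure_univ]
    have hsum' : (μ A).toReal + (μ Aᶜ).toReal = 1 := by
      rw [← ENNReal.toReal_add (measure_ne_top μ A) (measure_ne_top μ Aᶜ), hsum]
      simp
    rw [hq] at hsum'
    linarith
  have hq1 : 2*I ≤ 1 := by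
    rw [← hq]
    exact ENNReal.toReal_le_of_le_ofReal (by norm_num) (by simpa using prob_le_one (μ := μ) (s := Aᶜ))
  have bern : 1 + (tmax:ℝ) * (-(2*I)) ≤ (1 - 2*I)^tmax := by
    have := one_add_mul_le_pow (a := -(2*I)) (by linarith) tmax
    simpa [sub_eq_add_neg] using this
  have htm : (tmax:ℝ) ≤ (n:ℝ)^10 := by exact_mod_cast htmax
  have hfin : (tmax:ℝ) * (2*I) ≤ ((n:ℝ)^10)⁻¹/2 := by
    have h20eq : ((n:ℝ)^20)⁻¹ = ((n:ℝ)^10)⁻¹ * ((n:ℝ)^10)⁻¹ := by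
      rw [← mul_inv, ← pow_add]
    have hnpos : (0:ℝ) < (n:ℝ)^10 := by positivity
    calc (tmax:ℝ) * (2*I) ≤ (n:ℝ)^10 * (2*(1/4 * ((n:ℝ)^20)⁻¹)) := by
          apply mul_le_mul htm (by linarith) (by linarith [hInn]) (by positivity)
      _ = ((n:ℝ)^10)⁻¹/2 := by
          rw [h20eq]
          field_simp
          ring
    
  calc (1:ℝ) - ((n : ℝ) ^ 10)⁻¹ / 2 ≤ 1 + (tmax:ℝ) * (-(2*I)) := by linarith
    _ ≤ (1 - 2*I)^tmax := bern
    _ = (μ A).toReal ^ tmax := by rw [hp]
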